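/- arXiv:2511.16873 — 4 statements merged into one kernel-verified Lean document; each statement's English description precedes it below -/
import Mathlib

section
/- Let F be a field of characteristic not 2, E = F(√τ) a quadratic extension, and G = SL₂(E) with the involution θ given by applying the nontrivial Galois automorphism of E/F to each matrix entry. Then an element g ∈ SL₂(E) satisfies g·θ(g) = 1 if and only if g can be written in the form [[a, b√τ],[c√τ, ā]] with a ∈ E, b, c ∈ F, and a·ā − b·c·τ = 1, where ā denotes the Galois conjugate of a. -/
open Matrix

/-- For `E = F(√τ)` quadratic with Galois involution `σ` and `θ` entrywise
conjugation on `SL₂(E)`, an element `g` with `det g = 1` satisfies `g · θ(g) = 1` iff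
`g = [[a, b√τ],[c√τ, ā]]` with `a ∈ E`, `b, c ∈ F` and `a·ā − bcτ = 1`. -/
theorem stmt1 {F E : Type*} [Field F] [Field E] [Algebra F E]
    (h2 : (2 : F) ≠ 0) (τ : F) (hτ : ∀ a : F, a ^ 2 ≠ τ)
    (s : E) (hs : s ^ 2 = algebraMap F E τ)
    (hbasis : ∀ x : E, ∃ a b : F, x = algebraMap F E a + algebraMap F E b * s)
    (σ : E ≃ₐ[F] E) (hσ : σ s = -s)
    (g : Matrix (Fin 2) (Fin 2) E) (hg : g.det = 1) :
    g * g.map σ = 1 ↔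
      ∃ (a : E) (b c : F),
        g = !![a, algebraMap F E b * s; algebraMap F E c * s, σ a] ∧
        a * σ a - algebraMap F E (b * c * τ) = 1 := by
  have hinj : Function.Injective (algebraMap F E) := (algebraMap F E).injective
  have key : ∀ x : E, σ x = -x → ∃ b : F, x = algebraMap F E b * s := by
    intro x hx
    obtain ⟨a, b, rfl⟩ := hbasis x
    refine ⟨b, ?_⟩
    rw [map_add, _root_.map_mul, σ.commutes, σ.commutes, hσ] at hx
    have h2a : (2 : F) * a = 0 := by
      apply hinj
      rw [_root_.map_mul, map_ofNat, map_zero]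
      linear_combination hx
    have ha : a = 0 := by
      rcases mul_eq_zero.mp h2a with h | h
      · exact absurd h h2
      · exact h
    rw [ha, map_zero, zero_add]
  constructor
  · intro h
    have hinv : g.map σ = g⁻¹ := (Matrix.inv_eq_right_inv h).symm
    have hadj : g⁻¹ = g.adjugate := by
      rw [Matrix.inv_def, hg]; simp
    rw [hadj, Matrix.adjugate_fin_two] at hinv
    have e00 : σ (g 0 0) = g 1 1 := by
      have := congrFun (congrFun hinv 0) 0; simpa using this
    have e01 : σ (g 0 1) = -(g 0 1) := by
      have := congrFun (congrFun hinv 0) 1; simpa using this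
    have e10 : σ (g 1 0) = -(g 1 0) := by
      have := congrFun (congrFun hinv 1) 0; simpa using this
    obtain ⟨b, hb⟩ := key _ e01
    obtain ⟨c, hc⟩ := key _ e10
    refine ⟨g 0 0, b, c, ?_, ?_⟩
    · conv_lhs => rw [Matrix.eta_fin_two g]
      rw [hb, hc, e00]
    · rw [Matrix.det_fin_two, hb, hc] at hg
      rw [e00, _root_.map_mul, _root_.map_mul]
      linear_combination hg + algebraMap F E b * algebraMap F E c * hs
  · rintro ⟨a, b, c, rfl, habc⟩
    rw [_root_.map_mul, _root_.map_mul] at habc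
    have hinvol : ∀ x : E, σ (σ x) = x := by
      intro x
      obtain ⟨p, q, rfl⟩ := hbasis x
      rw [map_add, _root_.map_mul, σ.commutes, σ.commutes, hσ,
        map_add, _root_.map_mul, σ.commutes, σ.commutes, map_neg, hσ, neg_neg]
    have hσb : σ (algebraMap F E b * s) = -(algebraMap F E b * s) := by
      rw [_root_.map_mul, σ.commutes, hσ]; ring
    have hσc : σ (algebraMap F E c * s) = -(algebraMap F E c * s) := by
      rw [_root_.map_mul, σ.commutes, hσ]; ring
    have hmap : (!![a, algebraMap F E b * s; algebraMap F E c * s, σ a]).map σ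
        = !![σ a, -(algebraMap F E b * s); -(algebraMap F E c * s), a] := by
      ext i j
      fin_cases i <;> fin_cases j <;> simp [hσb, hσc, hinvol]
    rw [hmap, Matrix.mul_fin_two]
    ext i j
    fin_cases i <;> fin_cases j <;>
      simp [Matrix.one_apply] <;>
      first
        | linear_combination habc - algebraMap F E b * algebraMap F E c * hs
        | linear_combination algebraMap F E b * algebraMap F E c * hs - habc
        | ring
end

section
/- Let E = F(√τ) be a quadratic extension of a field F of characteristic not 2, with conjugation x ↦ x̄. Let η = [[x, √τ·a],[0, x̄]] with x ∈ E, x·x̄ = 1, a ∈ F. Suppose y ∈ Eˣ satisfies x = y/ȳ, and set γ = [[y,0],[0,y⁻¹]] and n₁ = [[1, √τ·a/(2yȳ)],[0,1]]. Then γ·n₁·θ(γ·n₁)⁻¹ = η, where θ is entrywise conjugation. -/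
open Matrix

/-- With `η = [[x, √τ·a],[0, x̄]]`, `x·x̄ = 1`, `x = y/ȳ`,
`γ = diag(y, y⁻¹)` and `n₁ = [[1, √τ·a/(2yȳ)],[0,1]]`, one has
`γ·n₁·θ(γ·n₁)⁻¹ = η`, where `θ` is entrywise Galois conjugation. -/
theorem stmt6 {F E : Type*} [Field F] [Field E] [Algebra F E]
    (h2 : (2 : E) ≠ 0) (τ : F) (hτ : ∀ a : F, a ^ 2 ≠ τ)
    (s : E) (hs : s ^ 2 = algebraMap F E τ)
    (σ : E ≃ₐ[F] E) (hσ : σ s = -s)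
    (x y : E) (hy : y ≠ 0) (hnorm : x * σ x = 1) (hxy : x = y / σ y)
    (a : F) :
    (!![y, 0; 0, y⁻¹] : Matrix (Fin 2) (Fin 2) E) *
        !![1, s * algebraMap F E a / (2 * (y * σ y)); 0, 1] *
        (((!![y, 0; 0, y⁻¹] : Matrix (Fin 2) (Fin 2) E) *
          !![1, s * algebraMap F E a / (2 * (y * σ y)); 0, 1]).map σ)⁻¹ =
      !![x, s * algebraMap F E a; 0, σ x] := by
  have hsy : σ y ≠ 0 := fun h => hy (by simpa using σ.injective (h.trans (map_zero σ).symm))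
  have hσ2 : σ (σ y) = y := by
    have h2' : σ (σ y) ≠ 0 := fun h => hsy (by simpa using σ.injective (h.trans (map_zero σ).symm))
    have h := hnorm
    rw [hxy, map_div₀] at h
    field_simp at h
    exact h.symm
  have hσx : σ x = σ y / y := by rw [hxy, map_div₀, hσ2]
  set A := algebraMap F E a with hA
  have hσA : σ A = A := σ.commutes a
  set c : E := s * A / (2 * (y * σ y)) with hc
  have hσc : σ c = -(s * A) / (2 * (y * σ y)) := by
    rw [hc, map_div₀, _root_.map_mul, _root_.map_mul, _root_.map_mul, hσ, hσA, hσ2,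
      show (σ 2 : E) = 2 from map_ofNat σ 2]
    ring
  have hmul : ((!![y, 0; 0, y⁻¹] : Matrix (Fin 2) (Fin 2) E) * !![1, c; 0, 1])
      = !![y, y * c; 0, y⁻¹] := by
    ext i j; fin_cases i <;> fin_cases j <;>
      simp [Matrix.mul_apply, Fin.sum_univ_two]
  have hmap : (!![y, y * c; 0, y⁻¹] : Matrix (Fin 2) (Fin 2) E).map σ
      = !![σ y, σ y * σ c; 0, (σ y)⁻¹] := by
    ext i j; fin_cases i <;> fin_cases j <;> simp [map_inv₀]
  have hinv : (!![σ y, σ y * σ c; 0, (σ y)⁻¹] : Matrix (Fin 2) (Fin 2) E)⁻¹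
      = !![(σ y)⁻¹, -(σ y * σ c); 0, σ y] := by
    apply inv_eq_right_inv
    ext i j; fin_cases i <;> fin_cases j <;>
      simp [Matrix.mul_apply, Fin.sum_univ_two, Matrix.one_apply]
    all_goals first | ring1 | exact mul_inv_cancel₀ hsy | exact inv_mul_cancel₀ hsy
  rw [hmul, hmap, hinv]
  ext i j; fin_cases i <;> fin_cases j <;>
    simp [Matrix.mul_apply, Fin.sum_univ_two, hxy, hσx, hσc, hc, hσ2]
  all_goals field_simp
  all_goals first | ring1 | (rw [hσ, hσA, show (σ 2 : E) = 2 from map_ofNat σ 2, mul_div_cancel_right₀ _ h2]; ring)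
end

section
/- Let E = F(√τ) (char F ≠ 2) with entrywise conjugation θ on M₂(E). The set 𝔬⁺ = {g ∈ SL₂(E) : g·θ(g) = 1 and tr(g) = 2} equals {[[1 + √τ·a, √τ·b],[√τ·c, 1 − √τ·a]] : a, b, c ∈ F, a² + bc = 0}. In particular, the map sending such g to the matrix [[a,b],[c,−a]] ∈ 𝔰𝔩₂(F) is a bijection from 𝔬⁺ onto the nilpotent cone {M ∈ 𝔰𝔩₂(F) : M² = 0}. -/
open Matrix

/-- The fiber `𝔬⁺ = {g ∈ X : tr g = 2}` of the symmetric space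
`X = {g ∈ SL₂(E) : g·θ(g) = 1}` is exactly the set of matrices
`[[1+√τ a, √τ b],[√τ c, 1−√τ a]]` with `a² + bc = 0`, and `M ↦ 1 + √τ·M` is a bijection
from the nilpotent cone of `𝔰𝔩₂(F)` onto `𝔬⁺`. -/
theorem stmt9 {F E : Type*} [Field F] [Field E] [Algebra F E]
    (h2 : (2 : F) ≠ 0) (τ : F) (hτ : ∀ a : F, a ^ 2 ≠ τ)
    (s : E) (hs : s ^ 2 = algebraMap F E τ) (hs0 : s ≠ 0)
    (hbasis : ∀ x : E, ∃ a b : F, x = algebraMap F E a + algebraMap F E b * s)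
    (σ : E ≃ₐ[F] E) (hσ : σ s = -s) :
    {g : Matrix (Fin 2) (Fin 2) E | g.det = 1 ∧ g * g.map σ = 1 ∧ g.trace = 2} =
      {g : Matrix (Fin 2) (Fin 2) E | ∃ a b c : F, a ^ 2 + b * c = 0 ∧
        g = !![1 + s * algebraMap F E a, s * algebraMap F E b;
               s * algebraMap F E c, 1 - s * algebraMap F E a]} ∧
    Set.BijOn (fun M : Matrix (Fin 2) (Fin 2) F => 1 + s • M.map (algebraMap F E))
      {M : Matrix (Fin 2) (Fin 2) F | M.trace = 0 ∧ M * M = 0}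
      {g : Matrix (Fin 2) (Fin 2) E | g.det = 1 ∧ g * g.map σ = 1 ∧ g.trace = 2} := by
  set A := algebraMap F E with hA
  have hinj : Function.Injective A := (algebraMap F E).injective
  have hτ0 : τ ≠ 0 := fun h => hτ 0 (by simp [h])
  have hchar : ∀ x : F, x + x = 0 → x = 0 := by
    intro x h
    have h' : 2 * x = 0 := by linear_combination h
    rcases mul_eq_zero.mp h' with h'' | h''
    · exact absurd h'' h2
    · exact h''
  have hσform : ∀ a b : F, σ (A a + A b * s) = A a - A b * s := by
    intro a b
    rw [map_add, _root_.map_mul, σ.commutes, σ.commutes, hσ]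
    ring
  have hset : {g : Matrix (Fin 2) (Fin 2) E | g.det = 1 ∧ g * g.map σ = 1 ∧ g.trace = 2} =
      {g : Matrix (Fin 2) (Fin 2) E | ∃ a b c : F, a ^ 2 + b * c = 0 ∧
        g = !![1 + s * A a, s * A b; s * A c, 1 - s * A a]} := by
    ext g
    simp only [Set.mem_setOf_eq]
    constructor
    · rintro ⟨hdet, hmul, htr⟩
      have hadj' : g.adjugate * g = 1 := by rw [Matrix.adjugate_mul, hdet, one_smul]
      have hmapadj : g.map σ = g.adjugate := by
        calc g.map σ = (g.adjugate * g) * g.map σ := by rw [hadj', one_mul]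
          _ = g.adjugate * (g * g.map σ) := by rw [Matrix.mul_assoc]
          _ = g.adjugate := by rw [hmul, mul_one]
      rw [Matrix.adjugate_fin_two] at hmapadj
      have e00 : σ (g 0 0) = g 1 1 := by
        have := congrArg (fun m : Matrix (Fin 2) (Fin 2) E => m 0 0) hmapadj
        simpa [Matrix.map_apply] using this
      have e01 : σ (g 0 1) = -(g 0 1) := by
        have := congrArg (fun m : Matrix (Fin 2) (Fin 2) E => m 0 1) hmapadj
        simpa [Matrix.map_apply] using this
      have e10 : σ (g 1 0) = -(g 1 0) := by
        have := congrArg (fun m : Matrix (Fin 2) (Fin 2) E => m 1 0) hmapadj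
        simpa [Matrix.map_apply] using this
      obtain ⟨p, a, hg00⟩ := hbasis (g 0 0)
      obtain ⟨q, b, hg01⟩ := hbasis (g 0 1)
      obtain ⟨r, c, hg10⟩ := hbasis (g 1 0)
      have hg11 : g 1 1 = A p - A a * s := by rw [← e00, hg00, hσform]
      have hq : q = 0 := by
        have h1 : A q - A b * s = -(A q + A b * s) := by rw [← hσform, ← hg01, e01, hg01]
        refine hchar q (hinj ?_)
        rw [map_add, map_zero]
        linear_combination h1
      have hr : r = 0 := by
        have h1 : A r - A c * s = -(A r + A c * s) := by rw [← hσform, ← hg10, e10, hg10]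
        refine hchar r (hinj ?_)
        rw [map_add, map_zero]
        linear_combination h1
      have hp : p = 1 := by
        rw [Matrix.trace_fin_two, hg00, hg11] at htr
        have h1 : p + p = 1 + 1 :=
          hinj (by rw [map_add, map_add, _root_.map_one]; linear_combination htr)
        have h2' : 2 * p = 2 * 1 := by linear_combination h1
        exact mul_left_cancel₀ h2 h2'
      subst hp hq hr
      rw [Matrix.det_fin_two, hg00, hg01, hg10, hg11] at hdet
      simp only [_root_.map_one, map_zero] at hdet hg00 hg01 hg10 hg11
      have hkey : τ * (a ^ 2 + b * c) = 0 := by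
        refine hinj ?_
        rw [map_zero, _root_.map_mul, map_add, map_pow, _root_.map_mul]
        linear_combination -hdet - (A a ^ 2 + A b * A c) * hs
      have habc : a ^ 2 + b * c = 0 := by
        rcases mul_eq_zero.mp hkey with h | h
        · exact absurd h hτ0
        · exact h
      refine ⟨a, b, c, habc, ?_⟩
      rw [Matrix.eta_fin_two g, hg00, hg01, hg10, hg11]
      ext i j
      fin_cases i <;> fin_cases j <;> simp <;> ring
    · rintro ⟨a, b, c, habc, rfl⟩
      have h0 : A a ^ 2 + A b * A c = 0 := by
        rw [← map_pow, ← _root_.map_mul, ← map_add, habc, map_zero]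
      have hmap : (!![1 + s * A a, s * A b; s * A c, 1 - s * A a]).map σ =
          !![1 - s * A a, -(s * A b); -(s * A c), 1 + s * A a] := by
        ext i j
        fin_cases i <;> fin_cases j <;>
          simp [Matrix.map_apply, map_add, _root_.map_one, _root_.map_mul, hσ, hA, σ.commutes] <;>
          ring
      refine ⟨?_, ?_, ?_⟩
      · rw [Matrix.det_fin_two_of]
        linear_combination (-(s ^ 2)) * h0
      · rw [hmap, Matrix.mul_fin_two]
        ext i j
        fin_cases i <;> fin_cases j <;> simp [Matrix.one_apply] <;>
          first | ring1 | linear_combination (-(s ^ 2)) * h0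
      · rw [Matrix.trace_fin_two_of]
        ring
  refine ⟨hset, ?_, ?_, ?_⟩
  · -- MapsTo
    rintro M ⟨htr, hM2⟩
    refine (Set.ext_iff.mp hset _).mpr ?_
    have h11 : M 1 1 = -M 0 0 := by
      rw [Matrix.trace_fin_two] at htr
      linear_combination htr
    have habc : M 0 0 ^ 2 + M 0 1 * M 1 0 = 0 := by
      have := congrArg (fun m : Matrix (Fin 2) (Fin 2) F => m 0 0) hM2
      simp only [Matrix.mul_apply, Fin.sum_univ_two, Matrix.zero_apply] at this
      linear_combination this
    refine ⟨M 0 0, M 0 1, M 1 0, habc, ?_⟩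
    ext i j
    fin_cases i <;> fin_cases j <;>
      simp [Matrix.add_apply, Matrix.smul_apply, Matrix.map_apply, Matrix.one_apply,
        smul_eq_mul, h11, map_neg] <;>
      ring
  · -- InjOn
    intro M hM N hN h
    have h1 : s • M.map A = s • N.map A := by
      simp only at h
      exact add_left_cancel h
    have h2' : M.map A = N.map A := smul_right_injective _ hs0 h1
    ext i j
    exact hinj (by
      have := congrArg (fun m : Matrix (Fin 2) (Fin 2) E => m i j) h2'
      simpa [Matrix.map_apply] using this)
  · -- SurjOn
    intro g hg
    obtain ⟨a, b, c, habc, hgeq⟩ := (Set.ext_iff.mp hset g).mp hg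
    refine ⟨!![a, b; c, -a], ⟨?_, ?_⟩, ?_⟩
    · rw [Set.mem_setOf_eq] at *
      rw [Matrix.trace_fin_two_of]
      ring
    · rw [Matrix.mul_fin_two]
      ext i j
      fin_cases i <;> fin_cases j <;> simp <;>
        first | ring1 | linear_combination habc
    · simp only
      rw [hgeq]
      ext i j
      fin_cases i <;> fin_cases j <;>
        simp [Matrix.add_apply, Matrix.smul_apply, Matrix.map_apply, Matrix.one_apply,
          smul_eq_mul, map_neg] <;>
        ring
end

section
/- Let E = F(√τ) be a quadratic extension of a field F (char ≠ 2), θ entrywise conjugation on M₂(E), and let η = diag(x, x̄) ∈ SL₂(E) with xx̄ = 1, x = y/ȳ for y ∈ Eˣ, and γ = diag(y, y⁻¹). For n = [[1, √τ·a/(2yȳ)],[0,1]] with a ∈ F (so n·θ(n)⁻¹ has upper-right entry √τ·a/x up to the η factor), one has the exact identity κ_ε⁻¹(γ·n·θ(n)⁻¹·θ(γ)⁻¹) = κ_ε⁻¹(η) − √τ·[[0, 2aε/((ε−x)(ε−x̄))],[0,0]], whenever det(ε − η) = (ε−x)(ε−x̄) ≠ 0, where κ_ε⁻¹(g) = −(ε+g)(ε−g)⁻¹.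 -/
open Matrix

set_option maxHeartbeats 1000000 in
/-- For `η = diag(x, x̄)` with `xx̄ = 1`, `x = y/ȳ`, `γ = diag(y, y⁻¹)`,
`n = [[1, √τ·a/(2yȳ)],[0,1]]` and `(ε − x)(ε − x̄) ≠ 0`, the inverse Cayley transform
satisfies `κ_ε⁻¹(γ·n·θ(n)⁻¹·θ(γ)⁻¹) = κ_ε⁻¹(η) − √τ·[[0, 2aε/((ε−x)(ε−x̄))],[0,0]]`,
where `κ_ε⁻¹(g) = −(ε+g)(ε−g)⁻¹`. -/
theorem stmt18 {F E : Type*} [Field F] [Field E] [Algebra F E]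
    (h2 : (2 : E) ≠ 0) (τ : F) (hτ : ∀ a : F, a ^ 2 ≠ τ)
    (s : E) (hs : s ^ 2 = algebraMap F E τ)
    (σ : E ≃ₐ[F] E) (hσ : σ s = -s)
    (ε : F) (hε : ε = 1 ∨ ε = -1)
    (x y : E) (hy : y ≠ 0) (hnorm : x * σ x = 1) (hxy : x = y / σ y)
    (a : F)
    (hreg : (algebraMap F E ε - x) * (algebraMap F E ε - σ x) ≠ 0) :
    -(((algebraMap F E ε) • (1 : Matrix (Fin 2) (Fin 2) E) +
        (!![y, 0; 0, y⁻¹] : Matrix (Fin 2) (Fin 2) E) *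
          !![1, s * algebraMap F E a / (2 * (y * σ y)); 0, 1] *
          ((!![1, s * algebraMap F E a / (2 * (y * σ y)); 0, 1] :
              Matrix (Fin 2) (Fin 2) E).map σ)⁻¹ *
          (((!![y, 0; 0, y⁻¹] : Matrix (Fin 2) (Fin 2) E)).map σ)⁻¹) *
      ((algebraMap F E ε) • (1 : Matrix (Fin 2) (Fin 2) E) -
        (!![y, 0; 0, y⁻¹] : Matrix (Fin 2) (Fin 2) E) *
          !![1, s * algebraMap F E a / (2 * (y * σ y)); 0, 1] *
          ((!![1, s * algebraMap F E a / (2 * (y * σ y)); 0, 1] :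
              Matrix (Fin 2) (Fin 2) E).map σ)⁻¹ *
          (((!![y, 0; 0, y⁻¹] : Matrix (Fin 2) (Fin 2) E)).map σ)⁻¹)⁻¹) =
    -(((algebraMap F E ε) • (1 : Matrix (Fin 2) (Fin 2) E) +
        (!![x, 0; 0, σ x] : Matrix (Fin 2) (Fin 2) E)) *
      ((algebraMap F E ε) • (1 : Matrix (Fin 2) (Fin 2) E) -
        (!![x, 0; 0, σ x] : Matrix (Fin 2) (Fin 2) E))⁻¹) -
    s • (!![0, 2 * algebraMap F E a * algebraMap F E ε /
          ((algebraMap F E ε - x) * (algebraMap F E ε - σ x)); 0, 0] :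
        Matrix (Fin 2) (Fin 2) E) := by
  set e := algebraMap F E ε with he
  set A := algebraMap F E a with hA
  have hε1 : e - x ≠ 0 := left_ne_zero_of_mul hreg
  have hε2 : e - σ x ≠ 0 := right_ne_zero_of_mul hreg
  have hsy : σ y ≠ 0 := by simpa using hy
  have hssy : σ (σ y) ≠ 0 := by simpa using hy
  have hyy : σ (σ y) = y := by
    have h := hnorm
    rw [hxy, map_div₀] at h
    field_simp at h
    exact h.symm
  have hσA : σ A = A := σ.commutes a
  -- value of σ t
  have hσt : σ (s * A / (2 * (y * σ y))) = -(s * A / (2 * (y * σ y))) := by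
    rw [map_div₀, _root_.map_mul, _root_.map_mul, _root_.map_mul, hσ, hσA, hyy, map_ofNat]
    ring
  -- inverse of mapped n
  have hmapn : (!![1, s * A / (2 * (y * σ y)); 0, 1] : Matrix (Fin 2) (Fin 2) E).map σ
      = !![1, -(s * A / (2 * (y * σ y))); 0, 1] := by
    ext i j
    fin_cases i <;> fin_cases j <;> simp [hσt]
  have hninv : ((!![1, s * A / (2 * (y * σ y)); 0, 1] : Matrix (Fin 2) (Fin 2) E).map σ)⁻¹
      = !![1, s * A / (2 * (y * σ y)); 0, 1] := by
    rw [hmapn]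
    refine inv_eq_right_inv ?_
    ext i j
    fin_cases i <;> fin_cases j <;>
      simp [Matrix.mul_apply, Fin.sum_univ_two]
  -- inverse of mapped γ
  have hmapg : (!![y, 0; 0, y⁻¹] : Matrix (Fin 2) (Fin 2) E).map σ
      = !![σ y, 0; 0, (σ y)⁻¹] := by
    ext i j
    fin_cases i <;> fin_cases j <;> simp
  have hginv : ((!![y, 0; 0, y⁻¹] : Matrix (Fin 2) (Fin 2) E).map σ)⁻¹
      = !![(σ y)⁻¹, 0; 0, σ y] := by
    rw [hmapg]
    refine inv_eq_right_inv ?_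
    ext i j
    fin_cases i <;> fin_cases j <;>
      simp [Matrix.mul_apply, Fin.sum_univ_two, mul_inv_cancel₀ hsy, inv_mul_cancel₀ hsy]
  -- the group element
  have key : (!![y, 0; 0, y⁻¹] : Matrix (Fin 2) (Fin 2) E) *
      !![1, s * A / (2 * (y * σ y)); 0, 1] *
      ((!![1, s * A / (2 * (y * σ y)); 0, 1] : Matrix (Fin 2) (Fin 2) E).map σ)⁻¹ *
      ((!![y, 0; 0, y⁻¹] : Matrix (Fin 2) (Fin 2) E).map σ)⁻¹
      = !![x, s * A; 0, σ x] := by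
    rw [hninv, hginv]
    have hσx : σ x = σ y / y := by rw [hxy, map_div₀, hyy]
    ext i j
    fin_cases i <;> fin_cases j <;>
      simp [Matrix.mul_apply, Fin.sum_univ_two, hxy, hσx]
    all_goals try tauto
    all_goals try field_simp
    all_goals try ring
    all_goals tauto
  rw [key]
  -- explicit inverses of the Cayley denominators
  have hsm : e • (1 : Matrix (Fin 2) (Fin 2) E) = !![e, 0; 0, e] := by
    ext i j
    fin_cases i <;> fin_cases j <;> simp
  have hinv1 : (e • (1 : Matrix (Fin 2) (Fin 2) E) - !![x, s * A; 0, σ x])⁻¹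
      = !![(e - σ x) / ((e - x) * (e - σ x)), s * A / ((e - x) * (e - σ x));
            0, (e - x) / ((e - x) * (e - σ x))] := by
    refine inv_eq_right_inv ?_
    rw [hsm]
    ext i j
    fin_cases i <;> fin_cases j <;>
      simp [Matrix.mul_apply, Fin.sum_univ_two] <;> field_simp <;> ring
  have hinv2 : (e • (1 : Matrix (Fin 2) (Fin 2) E) - !![x, 0; 0, σ x])⁻¹
      = !![(e - x)⁻¹, 0; 0, (e - σ x)⁻¹] := by
    refine inv_eq_right_inv ?_
    rw [hsm]
    ext i j
    fin_cases i <;> fin_cases j <;>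
      simp [Matrix.mul_apply, Fin.sum_univ_two] <;> field_simp
  rw [hinv1, hinv2, hsm]
  ext i j
  fin_cases i <;> fin_cases j <;>
    simp [Matrix.mul_apply, Fin.sum_univ_two]
  all_goals try tauto
  all_goals try field_simp
  all_goals try ring
  all_goals tauto
end
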